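/- Let q be a prime power, let a_1, ..., a_n be distinct elements of F_q, let v_1, ..., v_n be nonzero elements of F_q, and assume 1 ≤ k ≤ ⌊(n+1)/2⌋. Then the extended generalized Reed–Solomon code GRS_k(a, v, ∞) is Euclidean self-orthogonal if and only if there exists a polynomial λ(x) = −x^{n−2k+1} + λ_{n−2k} x^{n−2k} + ··· + λ_1 x + λ_0 ∈ F_q[x] (that is, a polynomial of degree n−2k+1 whose leading coefficient is −1) such that v_i^2 = λ(a_i) · L_a(a_i)^{−1} and λ(a_i) ≠ 0 for every 1 ≤ i ≤ n. -/

import Mathlib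

open Finset

variable {F : Type*} [Field F]

/-- The extended generalized Reed–Solomon code
`GRS_k(a, v, ∞) = { (v₁ f(a₁), …, vₙ f(aₙ), f_{k-1}) : f ∈ F[x], deg f ≤ k - 1 }`,
where `f_{k-1}` is the coefficient of `x^{k-1}` in `f`. -/
noncomputable def eGRSCode (n k : ℕ) (a v : Fin n → F) : Submodule F (Fin (n + 1) → F) :=
  (Polynomial.degreeLT F k).map
    (LinearMap.pi (Fin.lastCases (Polynomial.lcoeff F (k - 1))
      (fun i => v i • Polynomial.leval (a i))))

open Polynomial in
lemma coeff_basis_pred {n : ℕ} (a : Fin n → F) (ha : Function.Injective a) (i : Fin n) :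
    (Lagrange.basis Finset.univ a i).coeff (n - 1) =
      (∏ j ∈ Finset.univ.erase i, (a i - a j))⁻¹ := by
  have hinj : Set.InjOn a (Finset.univ : Finset (Fin n)) := ha.injOn
  have hnd : (Lagrange.basis Finset.univ a i).natDegree = n - 1 := by
    simpa using Lagrange.natDegree_basis hinj (Finset.mem_univ i)
  rw [← hnd, Polynomial.coeff_natDegree, Lagrange.basis, leadingCoeff_prod,
    ← Finset.prod_inv_distrib]
  refine Finset.prod_congr rfl fun j hj => ?_
  rw [Lagrange.basisDivisor, leadingCoeff_mul, leadingCoeff_C,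
    (monic_X_sub_C (a j)).leadingCoeff, mul_one]

open Polynomial in
lemma coeff_pred_eq_sum {n : ℕ} (a : Fin n → F) (ha : Function.Injective a)
    (h : Polynomial F) (hdeg : h.degree < (n : WithBot ℕ)) :
    h.coeff (n - 1) = ∑ i, h.eval (a i) * (∏ j ∈ Finset.univ.erase i, (a i - a j))⁻¹ := by
  have hinj : Set.InjOn a (Finset.univ : Finset (Fin n)) := ha.injOn
  have hi := Lagrange.eq_interpolate (s := Finset.univ) (v := a) hinj (by simpa using hdeg)
  conv_lhs => rw [hi]
  rw [Lagrange.interpolate_apply, Polynomial.finset_sum_coeff]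
  exact Finset.sum_congr rfl fun i _ => by
    rw [Polynomial.coeff_C_mul, coeff_basis_pred a ha i]

open Polynomial in
lemma key_moment {n : ℕ} (a : Fin n → F) (ha : Function.Injective a)
    (p : Polynomial F) (t : ℕ) (hn : 0 < n) (hd : p.natDegree + t ≤ n - 1) :
    ∑ i, p.eval (a i) * a i ^ t * (∏ j ∈ Finset.univ.erase i, (a i - a j))⁻¹
      = p.coeff (n - 1 - t) := by
  by_cases hp : p = 0
  · simp [hp]
  have hne : p * X ^ t ≠ 0 := mul_ne_zero hp (pow_ne_zero t X_ne_zero)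
  have hdeg : (p * X ^ t).degree < (n : WithBot ℕ) := by
    rw [← natDegree_lt_iff_degree_lt hne, natDegree_mul hp (pow_ne_zero t X_ne_zero),
      natDegree_X_pow]
    omega
  have h := coeff_pred_eq_sum a ha (p * X ^ t) hdeg
  rw [coeff_mul_X_pow' p t (n - 1), if_pos (by omega)] at h
  rw [h]
  exact Finset.sum_congr rfl fun i _ => by simp [mul_assoc]

/-- Lemma 3: criterion for Euclidean self-orthogonality of extended GRS codes.
Let `a 0, …, a (n-1)` be distinct elements of the finite field `F`, `v i` nonzero, and
`1 ≤ k ≤ ⌊(n+1)/2⌋`.  Then `GRS_k(a, v, ∞)` is Euclidean self-orthogonal iff there exists a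
polynomial `λ(x) = -x^{n-2k+1} + λ_{n-2k} x^{n-2k} + ⋯ + λ₀` (i.e. of degree `n - 2k + 1`
with leading coefficient `-1`) such that `v i ^ 2 = λ(a i) · L_a(a i)⁻¹ ≠ 0` for all `i`,
where `L_a(a i) = ∏_{j ≠ i} (a i - a j)`. -/
theorem eGRSCode_selfOrthogonal_iff (F : Type*) [Field F] [Fintype F]
    {n k : ℕ} (hk1 : 1 ≤ k) (hk2 : k ≤ (n + 1) / 2)
    (a : Fin n → F) (ha : Function.Injective a)
    (v : Fin n → F) (hv : ∀ i, v i ≠ 0) :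
    (∀ b ∈ eGRSCode n k a v, ∀ c ∈ eGRSCode n k a v, ∑ i, b i * c i = 0) ↔
      ∃ lam : Polynomial F, lam.degree = (n + 1 - 2 * k : ℕ) ∧ lam.leadingCoeff = -1 ∧
        ∀ i, v i ^ 2 = lam.eval (a i) * (∏ j ∈ Finset.univ.erase i, (a i - a j))⁻¹ ∧
          lam.eval (a i) ≠ 0 := by
  classical
  have hn2k : 2 * k ≤ n + 1 := by omega
  have hn : 0 < n := by omega
  set L : Fin n → F := fun i => ∏ j ∈ Finset.univ.erase i, (a i - a j) with hLdef
  have hLne : ∀ i, L i ≠ 0 := fun i =>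
    Finset.prod_ne_zero_iff.mpr fun j hj =>
      sub_ne_zero_of_ne fun h => (Finset.mem_erase.mp hj).1 (ha h).symm
  set M : Polynomial F → (Fin (n + 1) → F) := fun f =>
    Fin.lastCases (f.coeff (k - 1)) (fun i => v i * f.eval (a i)) with hMdef
  have hmap : ∀ f : Polynomial F,
      (LinearMap.pi (Fin.lastCases (Polynomial.lcoeff F (k - 1))
        (fun i => v i • Polynomial.leval (a i)))) f = M f := by
    intro f
    funext j
    induction j using Fin.lastCases with
    | last => simp [hMdef]
    | cast i => simp [hMdef]
  have hmem : ∀ b, b ∈ eGRSCode n k a v ↔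
      ∃ f : Polynomial F, f.degree < (k : WithBot ℕ) ∧ b = M f := by
    intro b
    constructor
    · rintro ⟨f, hf, rfl⟩
      exact ⟨f, Polynomial.mem_degreeLT.mp hf, hmap f⟩
    · rintro ⟨f, hf, rfl⟩
      exact ⟨f, Polynomial.mem_degreeLT.mpr hf, (hmap f)⟩
  have hsum : ∀ f g : Polynomial F,
      (∑ i : Fin (n + 1), M f i * M g i) =
      (∑ i : Fin n, v i ^ 2 * (f.eval (a i) * g.eval (a i)))
        + f.coeff (k - 1) * g.coeff (k - 1) := by
    intro f g
    rw [Fin.sum_univ_castSucc]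
    simp only [hMdef, Fin.lastCases_last, Fin.lastCases_castSucc]
    congr 1
    exact Finset.sum_congr rfl fun i _ => by ring
  set S : ℕ → F := fun t => ∑ i, v i ^ 2 * a i ^ t with hSdef
  constructor
  · -- forward direction
    intro hso
    have moment : ∀ r s : ℕ, r < k → s < k →
        S (r + s) + (if k - 1 = r then (1:F) else 0) * (if k - 1 = s then (1:F) else 0)
          = 0 := by
      intro r s hr hs
      have hXr : M (Polynomial.X ^ r) ∈ eGRSCode n k a v :=
        (hmem _).mpr ⟨Polynomial.X ^ r,
          lt_of_le_of_lt (Polynomial.degree_X_pow_le r) (by exact_mod_cast hr), rfl⟩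
      have hXs : M (Polynomial.X ^ s) ∈ eGRSCode n k a v :=
        (hmem _).mpr ⟨Polynomial.X ^ s,
          lt_of_le_of_lt (Polynomial.degree_X_pow_le s) (by exact_mod_cast hs), rfl⟩
      have h0 := hso _ hXr _ hXs
      rw [hsum] at h0
      have h1 : (∑ i : Fin n, v i ^ 2 *
          ((Polynomial.X ^ r).eval (a i) * (Polynomial.X ^ s).eval (a i))) = S (r + s) := by
        refine Finset.sum_congr rfl fun i _ => ?_
        simp [pow_add]
      rw [h1] at h0
      have h2 : (Polynomial.X ^ r : Polynomial F).coeff (k - 1) =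
          if k - 1 = r then (1 : F) else 0 := Polynomial.coeff_X_pow r (k - 1)
      have h3 : (Polynomial.X ^ s : Polynomial F).coeff (k - 1) =
          if k - 1 = s then (1 : F) else 0 := Polynomial.coeff_X_pow s (k - 1)
      rw [h2, h3] at h0
      exact h0
    have hS0 : ∀ t : ℕ, t < 2 * k - 2 → S t = 0 := by
      intro t ht
      have hm := moment (min t (k - 1)) (t - min t (k - 1)) (by omega) (by omega)
      rw [show min t (k - 1) + (t - min t (k - 1)) = t by omega] at hm
      by_cases h1 : k - 1 = min t (k - 1)
      · rw [if_pos h1, if_neg (by omega), mul_zero, add_zero] at hm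
        exact hm
      · rw [if_neg h1, zero_mul, add_zero] at hm
        exact hm
    have hS1 : S (2 * k - 2) = -1 := by
      have hm := moment (k - 1) (k - 1) (by omega) (by omega)
      rw [show k - 1 + (k - 1) = 2 * k - 2 by omega, if_pos rfl] at hm
      linear_combination hm
    set lam : Polynomial F :=
      Lagrange.interpolate Finset.univ a (fun i => v i ^ 2 * L i) with hlamdef
    have hinj : Set.InjOn a (Finset.univ : Finset (Fin n)) := ha.injOn
    have heval : ∀ i, lam.eval (a i) = v i ^ 2 * L i := fun i =>
      Lagrange.eval_interpolate_at_node _ hinj (Finset.mem_univ i)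
    have hdeglt : lam.degree < (n : WithBot ℕ) := by
      have h := Lagrange.degree_interpolate_lt (r := fun i => v i ^ 2 * L i) hinj
      rw [Finset.card_univ, Fintype.card_fin] at h
      exact h
    have hsum_eq : ∀ t : ℕ, ∑ i, lam.eval (a i) * a i ^ t * (L i)⁻¹ = S t := by
      intro t
      refine Finset.sum_congr rfl fun i _ => ?_
      rw [heval i, mul_assoc (v i ^ 2) (L i), mul_comm (L i) (a i ^ t), ← mul_assoc (v i ^ 2),
        mul_assoc, mul_inv_cancel₀ (hLne i), mul_one]
    have hcz : ∀ t : ℕ, t < 2 * k - 2 → lam.coeff (n - 1 - t) = 0 := by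
      intro t
      induction t using Nat.strong_induction_on with
      | _ t IH =>
        intro ht
        have hnd : lam.natDegree ≤ n - 1 - t := by
          rw [Polynomial.natDegree_le_iff_coeff_eq_zero]
          intro m hm
          by_cases hmn : n ≤ m
          · exact Polynomial.coeff_eq_zero_of_degree_lt
              (hdeglt.trans_le (by exact_mod_cast Nat.cast_le.mpr hmn))
          · rw [show m = n - 1 - (n - 1 - m) by omega]
            exact IH (n - 1 - m) (by omega) (by omega)
        have hk2 := key_moment a ha lam t hn (by omega)
        rw [hsum_eq t] at hk2
        rw [← hk2, hS0 t ht]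
    have hnd2 : lam.natDegree ≤ n + 1 - 2 * k := by
      rw [Polynomial.natDegree_le_iff_coeff_eq_zero]
      intro m hm
      by_cases hmn : n ≤ m
      · exact Polynomial.coeff_eq_zero_of_degree_lt
          (hdeglt.trans_le (by exact_mod_cast Nat.cast_le.mpr hmn))
      · rw [show m = n - 1 - (n - 1 - m) by omega]
        exact hcz (n - 1 - m) (by omega)
    have hctop : lam.coeff (n + 1 - 2 * k) = -1 := by
      have hk3 := key_moment a ha lam (2 * k - 2) hn (by omega)
      rw [hsum_eq (2 * k - 2), hS1] at hk3
      rw [show n - 1 - (2 * k - 2) = n + 1 - 2 * k by omega] at hk3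
      exact hk3.symm
    have hlam_ne : lam ≠ 0 := by
      intro h
      rw [h, Polynomial.coeff_zero] at hctop
      exact one_ne_zero (neg_eq_zero.mp hctop.symm)
    have hndeq : lam.natDegree = n + 1 - 2 * k :=
      le_antisymm hnd2 (Polynomial.le_natDegree_of_ne_zero (hctop ▸ neg_ne_zero.mpr one_ne_zero))
    refine ⟨lam, ?_, ?_, fun i => ⟨?_, ?_⟩⟩
    · rw [Polynomial.degree_eq_natDegree hlam_ne, hndeq]
    · rw [Polynomial.leadingCoeff, hndeq, hctop]
    · rw [heval i, mul_assoc, mul_inv_cancel₀ (hLne i), mul_one]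
    · rw [heval i]
      exact mul_ne_zero (pow_ne_zero 2 (hv i)) (hLne i)
  · -- backward direction
    rintro ⟨lam, hdeg, hlc, hval⟩ b hb c hc
    obtain ⟨f, hf, rfl⟩ := (hmem b).mp hb
    obtain ⟨g, hg, rfl⟩ := (hmem c).mp hc
    have hlam_ne : lam ≠ 0 := fun h => by simp [h] at hdeg
    have hndeq : lam.natDegree = n + 1 - 2 * k :=
      Polynomial.natDegree_eq_of_degree_eq_some hdeg
    have hSt : ∀ t : ℕ, t ≤ 2 * k - 2 → S t = if t = 2 * k - 2 then -1 else 0 := by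
      intro t ht
      have hk3 := key_moment a ha lam t hn (by omega)
      have hsum_eq : ∑ i, lam.eval (a i) * a i ^ t * (L i)⁻¹ = S t := by
        refine Finset.sum_congr rfl fun i _ => ?_
        have h5 : v i ^ 2 = Polynomial.eval (a i) lam * (L i)⁻¹ := (hval i).1
        rw [h5]
        ring
      rw [hsum_eq] at hk3
      rw [hk3]
      split_ifs with h1
      · rw [show n - 1 - t = n + 1 - 2 * k by omega, ← hndeq, ← Polynomial.leadingCoeff, hlc]
      · exact Polynomial.coeff_eq_zero_of_natDegree_lt (by omega)
    rw [hsum]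
    have hnf : f.natDegree ≤ k - 1 := by
      by_cases hf0 : f = 0
      · simp [hf0]
      · have := (Polynomial.natDegree_lt_iff_degree_lt hf0).mpr hf
        omega
    have hng : g.natDegree ≤ k - 1 := by
      by_cases hg0 : g = 0
      · simp [hg0]
      · have := (Polynomial.natDegree_lt_iff_degree_lt hg0).mpr hg
        omega
    have hfg : (f * g).natDegree < 2 * k - 1 :=
      lt_of_le_of_lt (Polynomial.natDegree_mul_le) (by omega)
    have hev : ∀ i : Fin n, f.eval (a i) * g.eval (a i) =
        ∑ t ∈ Finset.range (2 * k - 1), (f * g).coeff t * a i ^ t := by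
      intro i
      rw [← Polynomial.eval_mul]
      exact Polynomial.eval_eq_sum_range' hfg (a i)
    have hmain : (∑ i : Fin n, v i ^ 2 * (f.eval (a i) * g.eval (a i)))
        = -((f * g).coeff (2 * k - 2)) := by
      calc (∑ i : Fin n, v i ^ 2 * (f.eval (a i) * g.eval (a i)))
          = ∑ i : Fin n, ∑ t ∈ Finset.range (2 * k - 1),
              (f * g).coeff t * (v i ^ 2 * a i ^ t) := by
            refine Finset.sum_congr rfl fun i _ => ?_
            rw [hev i, Finset.mul_sum]
            exact Finset.sum_congr rfl fun t _ => by ring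
        _ = ∑ t ∈ Finset.range (2 * k - 1), (f * g).coeff t * S t := by
            rw [Finset.sum_comm]
            exact Finset.sum_congr rfl fun t _ => by rw [hSdef, Finset.mul_sum]
        _ = -((f * g).coeff (2 * k - 2)) := by
            rw [Finset.sum_eq_single (2 * k - 2)]
            · rw [hSt (2 * k - 2) le_rfl, if_pos rfl]; ring
            · intro t htm htne
              rw [hSt t (by simp at htm; omega), if_neg htne, mul_zero]
            · intro habs
              exact absurd (Finset.mem_range.mpr (by omega)) habs
    rw [hmain]
    have hcoeff : (f * g).coeff (2 * k - 2) = f.coeff (k - 1) * g.coeff (k - 1) := by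
      rw [Polynomial.coeff_mul]
      rw [Finset.sum_eq_single_of_mem ((k - 1, k - 1))
        (Finset.HasAntidiagonal.mem_antidiagonal.mpr (by omega))]
      rintro ⟨x, y⟩ hxy hne
      rw [Finset.HasAntidiagonal.mem_antidiagonal] at hxy
      have hne' : ¬(x = k - 1 ∧ y = k - 1) := by
        rintro ⟨h1, h2⟩
        exact hne (by rw [h1, h2])
      by_cases hx : k - 1 < x
      · exact mul_eq_zero_of_left (Polynomial.coeff_eq_zero_of_natDegree_lt (by omega)) _
      · have hy : k - 1 < y := by
          rcases Nat.lt_or_ge (k - 1) y with h | h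
          · exact h
          · exact absurd ⟨by omega, by omega⟩ hne'
        exact mul_eq_zero_of_right _ (Polynomial.coeff_eq_zero_of_natDegree_lt (by omega))
    rw [hcoeff]
    ring
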